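/- (Dichotomy underlying the cleaning lemma for Majorana codes) Let C ⊆ F_2^N be weakly self-dual with all codewords of even weight, and let M ⊆ {1,...,N}. Then M supports a logical operator (∃ v ∈ C^⊥ \ C with supp(v) ⊆ M) if and only if M is uncleanable (∃ w ∈ C^⊥ such that for all y ∈ C, (w + y)|_M ≠ 0). -/

import Mathlib

/-- Hamming weight of a binary vector. -/
def wt {ι : Type*} [Fintype ι] (x : ι → ZMod 2) : ℕ :=
  (Finset.univ.filter fun i => x i ≠ 0).card

/-- Support of a binary vector. -/
def supp {ι : Type*} [Fintype ι] (x : ι → ZMod 2) : Finset ι :=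
  Finset.univ.filter fun i => x i ≠ 0

/-- The `F₂` inner product. -/
def dot {ι : Type*} [Fintype ι] (x y : ι → ZMod 2) : ZMod 2 := ∑ i, x i * y i

/-- The dual code `C^⊥` of a linear code `C ⊆ F₂^ι`. -/
def dualCode {ι : Type*} [Fintype ι] (C : Submodule (ZMod 2) (ι → ZMod 2)) :
    Submodule (ZMod 2) (ι → ZMod 2) where
  carrier := {y | ∀ x ∈ C, dot x y = 0}
  add_mem' := by
    intro a b ha hb x hx
    have h : dot x (a + b) = dot x a + dot x b := by
      simp [dot, mul_add, Finset.sum_add_distrib]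
    simp only [Set.mem_setOf_eq] at *
    rw [h, ha x hx, hb x hx, add_zero]
  zero_mem' := by intro x _; simp [dot]
  smul_mem' := by
    intro c a ha x hx
    have h : dot x (c • a) = c * dot x a := by
      simp only [dot, Pi.smul_apply, smul_eq_mul, Finset.mul_sum]
      exact Finset.sum_congr rfl fun i _ => by ring
    simp only [Set.mem_setOf_eq] at *
    rw [h, ha x hx, mul_zero]

/-- Restriction of a vector to a subset `M` of coordinates (extended by zero). -/
def restrict {ι : Type*} [Fintype ι] [DecidableEq ι] (M : Finset ι)
    (y : ι → ZMod 2) : ι → ZMod 2 :=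
  fun i => if i ∈ M then y i else 0

/-- `C(M)`: the subcode of codewords of `C` supported inside `M` (viewed in `F₂^M`). -/
def subCode {ι : Type*} [Fintype ι] (C : Submodule (ZMod 2) (ι → ZMod 2))
    (M : Finset ι) : Set (ι → ZMod 2) :=
  {x | x ∈ C ∧ ∀ i ∉ M, x i = 0}

/-- `C^M`: the restriction (puncturing) of `C` to `M`, i.e. the vectors supported on `M`
that equal the restriction to `M` of some codeword of `C`. -/
def restCode {ι : Type*} [Fintype ι] [DecidableEq ι]
    (C : Submodule (ZMod 2) (ι → ZMod 2)) (M : Finset ι) : Set (ι → ZMod 2) :=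
  {z | ∃ y ∈ C, z = restrict M y}

-- auxiliary lemmas
lemma dot_comm {ι : Type*} [Fintype ι] (x y : ι → ZMod 2) : dot x y = dot y x := by
  simp [dot, mul_comm]

lemma mem_dualCode {ι : Type*} [Fintype ι] {C : Submodule (ZMod 2) (ι → ZMod 2)}
    {y : ι → ZMod 2} : y ∈ dualCode C ↔ ∀ x ∈ C, dot x y = 0 := Iff.rfl

def dotBilin (N : ℕ) : LinearMap.BilinForm (ZMod 2) (Fin N → ZMod 2) :=
  LinearMap.mk₂ (ZMod 2) (fun x y => dot x y)
    (fun x y z => by simp [dot, add_mul, Finset.sum_add_distrib])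
    (fun c x y => by
      simp only [dot, Pi.smul_apply, smul_eq_mul, Finset.mul_sum]
      exact Finset.sum_congr rfl fun i _ => by ring)
    (fun x y z => by simp [dot, mul_add, Finset.sum_add_distrib])
    (fun c x y => by
      simp only [dot, Pi.smul_apply, smul_eq_mul, Finset.mul_sum]
      exact Finset.sum_congr rfl fun i _ => by ring)

lemma dotBilin_apply {N : ℕ} (x y : Fin N → ZMod 2) : dotBilin N x y = dot x y := rfl

lemma dotBilin_refl {N : ℕ} : (dotBilin N).IsRefl := by
  intro x y h
  rwa [dotBilin_apply, dot_comm, ← dotBilin_apply]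

lemma dotBilin_nondeg {N : ℕ} : (dotBilin N).Nondegenerate := by
  refine (LinearMap.IsRefl.nondegenerate_iff_separatingLeft dotBilin_refl).mpr ?_
  intro x hx
  funext i
  have := hx (Pi.single i 1)
  rw [dotBilin_apply] at this
  simpa [dot, Pi.single_apply, mul_ite, Finset.sum_ite_eq'] using this

lemma dualCode_eq_orthogonal {N : ℕ} (C : Submodule (ZMod 2) (Fin N → ZMod 2)) :
    dualCode C = (dotBilin N).orthogonal C := by
  ext y
  simp [mem_dualCode, LinearMap.BilinForm.mem_orthogonal_iff, LinearMap.BilinForm.IsOrtho,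
    dotBilin_apply]

lemma dualCode_dualCode {N : ℕ} (C : Submodule (ZMod 2) (Fin N → ZMod 2)) :
    dualCode (dualCode C) = C := by
  rw [dualCode_eq_orthogonal, dualCode_eq_orthogonal,
    LinearMap.BilinForm.orthogonal_orthogonal dotBilin_nondeg dotBilin_refl]

lemma dot_restrict {ι : Type*} [Fintype ι] [DecidableEq ι] (M : Finset ι)
    (a b : ι → ZMod 2) : dot (restrict M a) b = dot a (restrict M b) := by
  unfold dot restrict
  exact Finset.sum_congr rfl fun i _ => by split <;> simp

lemma restrict_add {ι : Type*} [Fintype ι] [DecidableEq ι] (M : Finset ι)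
    (a b : ι → ZMod 2) : restrict M (a + b) = restrict M a + restrict M b := by
  funext i; simp only [restrict, Pi.add_apply]; split <;> simp

lemma restrict_eq_zero_iff {ι : Type*} [Fintype ι] [DecidableEq ι] {M : Finset ι}
    {a : ι → ZMod 2} : restrict M a = 0 ↔ ∀ i ∈ M, a i = 0 := by
  constructor
  · intro h i hi
    have := congrFun h i
    simpa [restrict, hi] using this
  · intro h; funext i
    simp only [restrict, Pi.zero_apply]
    split
    · exact h i ‹_›
    · rfl

def restrictLin {ι : Type*} [Fintype ι] [DecidableEq ι] (M : Finset ι) :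
    (ι → ZMod 2) →ₗ[ZMod 2] (ι → ZMod 2) where
  toFun := restrict M
  map_add' := restrict_add M
  map_smul' := by
    intro c a; funext i
    simp only [restrict, Pi.smul_apply, smul_eq_mul, RingHom.id_apply]
    split <;> simp


/-- dichotomy underlying the cleaning lemma for Majorana codes: let
`C ⊆ F₂^N` be weakly self-dual with all codewords of even weight, and `M` a subset of the
coordinates.  Then `M` supports a logical operator (some `v ∈ C^⊥ \ C` with
`supp v ⊆ M`) if and only if `M` is uncleanable (some `w ∈ C^⊥` cannot be made to vanish
on `M` by adding any element of `C`). -/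
theorem stmt_19 {N : ℕ} (C : Submodule (ZMod 2) (Fin N → ZMod 2))
    (hsd : C ≤ dualCode C)
    (hEven : ∀ x ∈ C, Even (wt x))
    (M : Finset (Fin N)) :
    (∃ v, v ∈ dualCode C ∧ v ∉ C ∧ ∀ i ∉ M, v i = 0) ↔
    (∃ w ∈ dualCode C, ∀ y ∈ C, restrict M (w + y) ≠ 0) := by
  constructor
  · rintro ⟨v, hvD, hvC, hvM⟩
    -- find w ∈ C^⊥ with dot w v ≠ 0
    have : ¬ ∀ w ∈ dualCode C, dot w v = 0 := by
      intro h
      exact hvC (by rw [← dualCode_dualCode C]; exact h)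
    push_neg at this
    obtain ⟨w, hwD, hwv⟩ := this
    refine ⟨w, hwD, fun y hy hzero => ?_⟩
    rw [restrict_eq_zero_iff] at hzero
    have hdot : dot v (w + y) = 0 := by
      unfold dot
      apply Finset.sum_eq_zero
      intro i _
      by_cases hi : i ∈ M
      · rw [hzero i hi, mul_zero]
      · rw [hvM i hi, zero_mul]
    have h1 : dot v (w + y) = dot v w + dot v y := by
      simp [dot, mul_add, Finset.sum_add_distrib]
    have h2 : dot v y = 0 := by rw [dot_comm]; exact hvD y hy
    rw [h1, h2, add_zero, dot_comm] at hdot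
    exact hwv hdot
  · rintro ⟨w, hwD, hw⟩
    by_contra hno
    push_neg at hno
    have H : ∀ v, v ∈ dualCode C → (∀ i ∉ M, v i = 0) → v ∈ C := by
      intro v hv hvM
      by_contra hvC
      obtain ⟨i, hi, hne⟩ := hno v hv hvC
      exact hne (hvM i hi)
    -- show restrict M w ∈ C.map (restrictLin M)
    have key : restrict M w ∈ C.map (restrictLin M) := by
      rw [← dualCode_dualCode (C.map (restrictLin M))]
      intro z hz
      -- hz : z ∈ dualCode (C.map restrictLin M)
      have hz' : ∀ y ∈ C, dot y (restrict M z) = 0 := by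
        intro y hy
        rw [← dot_restrict]
        exact hz (restrict M y) ⟨y, hy, rfl⟩
      have hzC : restrict M z ∈ C := by
        apply H _ hz'
        intro i hi
        simp [restrict, hi]
      have : dot (restrict M z) w = 0 := hwD _ hzC
      rw [dot_comm, ← dot_restrict, dot_comm] at this
      exact this
    obtain ⟨y, hy, hry⟩ := key
    refine hw y hy ?_
    have hry' : restrictLin M y = restrict M y := rfl
    rw [restrict_add]
    rw [hry'] at hry
    rw [← hry]
    funext i
    simp only [Pi.add_apply, Pi.zero_apply, restrict]
    split <;> [exact CharTwo.add_self_eq_zero _; exact (add_zero 0).trans rfl]
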